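/- Let E be a normed vector space over ℝ (or ℂ), A : E → E an invertible continuous linear map with continuous inverse, and suppose there exist constants C > 0 and 0 < r < 1 such that ‖A^{-n}‖ ≤ C r^n for all n ∈ ℕ. Let Y be a finite subset of E. Then there exists n₀ ∈ ℕ such that whenever ∑_{l=1}^{k} A^{n(l-1)} y_l = 0 for some y_1, …, y_k ∈ Y, some n ≥ n₀ and some k ∈ ℕ, we have y_1 = … = y_k = 0. -/
import Mathlib

/-- Geometric sum bound. -/
theorem statement5_geom (r : ℝ) (h0 : 0 ≤ r) (h1 : r < 1) (n : ℕ) :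
    ∑ i ∈ Finset.range n, r ^ i ≤ 1 / (1 - r) := by
  have h1r : 0 < 1 - r := by linarith
  have e : ∑ i ∈ Finset.range n, r ^ i = (1 - r ^ n) / (1 - r) := by
    rw [geom_sum_eq (ne_of_lt h1) n, div_eq_div_iff (by linarith) (ne_of_gt h1r)]
    ring
  rw [e, div_le_div_iff₀ h1r h1r]
  have : 0 ≤ r ^ n := pow_nonneg h0 n
  nlinarith

/-- Let `E` be a real normed vector space, `A : E → E` an invertible continuous
linear map with continuous inverse, with `‖A^{-n}‖ ≤ C r^n` for some `C > 0`, `0 < r < 1`,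
and all `n ∈ ℕ`. Let `Y` be a finite subset of `E`. Then there exists `n₀` such that
whenever `∑_{l=1}^{k} A^{n(l-1)} y_l = 0` for `y_1, …, y_k ∈ Y`, `n ≥ n₀`, `k ∈ ℕ`, we have
`y_1 = … = y_k = 0`. -/
theorem statement5 {E : Type*} [NormedAddCommGroup E] [NormedSpace ℝ E]
    (A : E ≃L[ℝ] E)
    (C r : ℝ) (hC : 0 < C) (hr0 : 0 < r) (hr1 : r < 1)
    (hbound : ∀ n : ℕ, ‖((A⁻¹ ^ n : E ≃L[ℝ] E) : E →L[ℝ] E)‖ ≤ C * r ^ n)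
    (Y : Finset E) :
    ∃ n₀ : ℕ, ∀ n ≥ n₀, ∀ k : ℕ, ∀ y : Fin k → E, (∀ l, y l ∈ Y) →
      (∑ l : Fin k, (A ^ (n * (l : ℕ))) (y l)) = 0 → ∀ l, y l = 0 := by
  classical
  set Y' : Finset E := Y.filter (fun v => v ≠ 0) with hY'def
  by_cases hY' : Y'.Nonempty
  · -- main case
    have hYne : Y.Nonempty :=
      ⟨hY'.choose, (Finset.mem_filter.mp hY'.choose_spec).1⟩
    set M : ℝ := Y.sup' hYne (fun v => ‖v‖) with hMdef
    set δ : ℝ := Y'.inf' hY' (fun v => ‖v‖) with hδdef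
    have hδpos : 0 < δ := by
      rw [hδdef, Finset.lt_inf'_iff]
      intro v hv
      exact norm_pos_iff.mpr (Finset.mem_filter.mp hv).2
    have hMle : ∀ v ∈ Y, ‖v‖ ≤ M := fun v hv => Finset.le_sup' _ hv
    have hδle : ∀ v ∈ Y, v ≠ 0 → δ ≤ ‖v‖ := by
      intro v hv hv0
      exact Finset.inf'_le _ (Finset.mem_filter.mpr ⟨hv, hv0⟩)
    have hMpos : 0 < M := by
      obtain ⟨v, hv⟩ := hY'
      have hvY := (Finset.mem_filter.mp hv).1
      have hv0 := (Finset.mem_filter.mp hv).2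
      exact lt_of_lt_of_le (norm_pos_iff.mpr hv0) (hMle v hvY)
    have h1r : (0:ℝ) < 1 - r := by linarith
    have hε : 0 < δ * (1 - r) / (C * M) := by positivity
    obtain ⟨N, hN⟩ := exists_pow_lt_of_lt_one hε hr1
    refine ⟨N + 1, ?_⟩
    intro n hn k y hy hsum
    by_contra hcon
    push_neg at hcon
    obtain ⟨l₀, hl₀⟩ := hcon
    set S : Finset (Fin k) := Finset.univ.filter (fun l => y l ≠ 0) with hSdef
    have hS : S.Nonempty := ⟨l₀, Finset.mem_filter.mpr ⟨Finset.mem_univ _, hl₀⟩⟩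
    set m : Fin k := S.max' hS with hmdef
    have hym : y m ≠ 0 := (Finset.mem_filter.mp (S.max'_mem hS)).2
    have hzero : ∀ l : Fin k, m < l → y l = 0 := by
      intro l hl
      by_contra h
      exact absurd (S.le_max' l (Finset.mem_filter.mpr ⟨Finset.mem_univ _, h⟩))
        (not_le.mpr hl)
    have hn1 : 1 ≤ n := le_trans (Nat.le_add_left 1 N) hn
    -- key algebraic identity
    have key : ∀ l : Fin k, (l:ℕ) ≤ (m:ℕ) → ∀ x : E,
        (A⁻¹ ^ (n * (m:ℕ)) : E ≃L[ℝ] E) ((A ^ (n * (l:ℕ)) : E ≃L[ℝ] E) x)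
          = (A⁻¹ ^ (n * ((m:ℕ) - (l:ℕ))) : E ≃L[ℝ] E) x := by
      intro l hlm x
      have hsplit : n * ((m:ℕ) - (l:ℕ)) + n * (l:ℕ) = n * (m:ℕ) := by
        rw [← Nat.mul_add, Nat.sub_add_cancel hlm]
      calc (A⁻¹ ^ (n * (m:ℕ)) : E ≃L[ℝ] E) ((A ^ (n * (l:ℕ)) : E ≃L[ℝ] E) x)
          = ((A⁻¹ ^ (n * ((m:ℕ) - (l:ℕ))) : E ≃L[ℝ] E) * (A⁻¹ ^ (n * (l:ℕ))))
              ((A ^ (n * (l:ℕ)) : E ≃L[ℝ] E) x) := by rw [← pow_add, hsplit]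
        _ = (A⁻¹ ^ (n * ((m:ℕ) - (l:ℕ))) : E ≃L[ℝ] E)
              ((A⁻¹ ^ (n * (l:ℕ)) : E ≃L[ℝ] E) ((A ^ (n * (l:ℕ)) : E ≃L[ℝ] E) x)) := rfl
        _ = (A⁻¹ ^ (n * ((m:ℕ) - (l:ℕ))) : E ≃L[ℝ] E) x := by
              congr 1
              rw [inv_pow]
              exact (A ^ (n * (l:ℕ))).symm_apply_apply x
    -- apply A⁻¹^(n*m) to the sum
    set g : Fin k → E := fun l => (A⁻¹ ^ (n * ((m:ℕ) - (l:ℕ))) : E ≃L[ℝ] E) (y l) with hgdef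
    have hgsum : ∑ l : Fin k, g l = 0 := by
      have h0 : (A⁻¹ ^ (n * (m:ℕ)) : E ≃L[ℝ] E) (∑ l : Fin k, (A ^ (n * (l:ℕ))) (y l)) = 0 := by
        rw [hsum]; exact map_zero _
      rw [map_sum] at h0
      rw [← h0]
      apply Finset.sum_congr rfl
      intro l _
      rcases le_or_gt (l:ℕ) (m:ℕ) with hlm | hlm
      · exact (key l hlm (y l)).symm
      · have hyl : y l = 0 := hzero l (by exact_mod_cast hlm)
        show (A⁻¹ ^ (n * ((m:ℕ) - (l:ℕ))) : E ≃L[ℝ] E) (y l) = _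
        rw [hyl, map_zero, map_zero, map_zero]
    have hgm : g m = y m := by
      show (A⁻¹ ^ (n * ((m:ℕ) - (m:ℕ))) : E ≃L[ℝ] E) (y m) = y m
      rw [Nat.sub_self, Nat.mul_zero, pow_zero]
      rfl
    have heq : y m = -∑ l ∈ Finset.univ.erase m, g l := by
      have h := Finset.add_sum_erase Finset.univ g (Finset.mem_univ m)
      rw [hgsum] at h
      rw [← hgm]
      exact eq_neg_of_add_eq_zero_left h
    -- norm bound on each term
    have hnormterm : ∀ l ∈ Finset.univ.erase m, ‖g l‖ ≤
        (if (l:ℕ) < (m:ℕ) then C * M * r ^ n * r ^ ((m:ℕ) - (l:ℕ) - 1) else 0) := by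
      intro l hl
      have hlm : l ≠ m := (Finset.mem_erase.mp hl).1
      rcases hlm.lt_or_gt with hlt | hgt
      · have hlt' : (l:ℕ) < (m:ℕ) := hlt
        rw [if_pos hlt']
        set d : ℕ := (m:ℕ) - (l:ℕ) with hddef
        have hd1 : 1 ≤ d := by omega
        have hgl : ‖g l‖ ≤ (C * r ^ (n * d)) * ‖y l‖ := by
          calc ‖g l‖ = ‖((A⁻¹ ^ (n * d) : E ≃L[ℝ] E) : E →L[ℝ] E) (y l)‖ := rfl
            _ ≤ ‖((A⁻¹ ^ (n * d) : E ≃L[ℝ] E) : E →L[ℝ] E)‖ * ‖y l‖ :=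
                ContinuousLinearMap.le_opNorm _ _
            _ ≤ (C * r ^ (n * d)) * ‖y l‖ := by
                apply mul_le_mul_of_nonneg_right (hbound (n * d)) (norm_nonneg _)
        have hrnd : r ^ (n * d) ≤ r ^ n * r ^ (d - 1) := by
          obtain ⟨e, he⟩ := Nat.exists_eq_add_of_le hd1
          rw [he]
          have h1 : n * (1 + e) = n + n * e := by ring
          rw [h1, pow_add]
          have h2 : r ^ (n * e) ≤ r ^ ((1 + e) - 1) := by
            have h3 : (1 + e) - 1 = e := by omega
            rw [h3]
            exact pow_le_pow_of_le_one hr0.le hr1.le (Nat.le_mul_of_pos_left e hn1)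
          exact mul_le_mul_of_nonneg_left h2 (pow_nonneg hr0.le n)
        calc ‖g l‖ ≤ (C * r ^ (n * d)) * ‖y l‖ := hgl
          _ ≤ (C * r ^ (n * d)) * M :=
              mul_le_mul_of_nonneg_left (hMle _ (hy l)) (by positivity)
          _ ≤ (C * (r ^ n * r ^ (d - 1))) * M := by
              apply mul_le_mul_of_nonneg_right _ hMpos.le
              exact mul_le_mul_of_nonneg_left hrnd hC.le
          _ = C * M * r ^ n * r ^ (d - 1) := by ring
      · have hyl : y l = 0 := hzero l hgt
        have : g l = 0 := by rw [hgdef]; simp [hyl]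
        rw [this, norm_zero]
        split <;> positivity
    -- sum the bounds
    have hsum1 : ‖y m‖ ≤ ∑ l ∈ Finset.univ.erase m, ‖g l‖ := by
      rw [heq, norm_neg]
      exact norm_sum_le _ _
    have hsum2 : ∑ l ∈ Finset.univ.erase m, ‖g l‖ ≤
        ∑ l : Fin k, (if (l:ℕ) < (m:ℕ) then C * M * r ^ n * r ^ ((m:ℕ) - (l:ℕ) - 1) else 0) := by
      apply le_trans (Finset.sum_le_sum hnormterm)
      apply Finset.sum_le_sum_of_subset_of_nonneg (Finset.subset_univ _)
      intro i _ _
      split <;> positivity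
    have hsum3 : ∑ l : Fin k, (if (l:ℕ) < (m:ℕ) then C * M * r ^ n * r ^ ((m:ℕ) - (l:ℕ) - 1) else 0)
        = C * M * r ^ n * ∑ i ∈ Finset.range (m:ℕ), r ^ i := by
      rw [Fin.sum_univ_eq_sum_range (fun i => if i < (m:ℕ) then C * M * r ^ n * r ^ ((m:ℕ) - i - 1) else 0)]
      rw [← Finset.sum_subset (Finset.range_subset_range.mpr m.isLt.le)
        (fun i _ hi => if_neg (by simpa using hi))]
      rw [← Finset.sum_range_reflect (fun j => r ^ j) (m:ℕ)]
      rw [Finset.mul_sum]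
      apply Finset.sum_congr rfl
      intro i hi
      rw [if_pos (Finset.mem_range.mp hi)]
      have h9 : (m:ℕ) - i - 1 = (m:ℕ) - 1 - i := by omega
      rw [h9]
    have hgeom : ∑ i ∈ Finset.range (m:ℕ), r ^ i ≤ 1 / (1 - r) :=
      statement5_geom r hr0.le hr1 _
    have hfinal : ‖y m‖ ≤ C * M * r ^ n * (1 / (1 - r)) := by
      calc ‖y m‖ ≤ C * M * r ^ n * ∑ i ∈ Finset.range (m:ℕ), r ^ i := by
            rw [← hsum3]; exact le_trans hsum1 hsum2
        _ ≤ C * M * r ^ n * (1 / (1 - r)) :=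
            mul_le_mul_of_nonneg_left hgeom (by positivity)
    have hrn : r ^ n < δ * (1 - r) / (C * M) := by
      calc r ^ n ≤ r ^ N := pow_le_pow_of_le_one hr0.le hr1.le (by omega)
        _ < _ := hN
    have hlt : ‖y m‖ < δ := by
      calc ‖y m‖ ≤ C * M * r ^ n * (1 / (1 - r)) := hfinal
        _ < C * M * (δ * (1 - r) / (C * M)) * (1 / (1 - r)) := by
            apply mul_lt_mul_of_pos_right _ (by positivity)
            exact mul_lt_mul_of_pos_left hrn (by positivity)
        _ = δ := by field_simp
    exact absurd (hδle _ (hy m) hym) (not_le.mpr hlt)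
  · refine ⟨0, ?_⟩
    intro n _ k y hy _ l
    by_contra h
    exact hY' ⟨y l, Finset.mem_filter.mpr ⟨hy l, h⟩⟩
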